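/- Under the same model (θ fixed, b ~ N(0,A), θ̂ᵇ | b ~ N(θ+b, σ²), b̂ | b ~ N(b, τ²), conditionally independent), the interval I = [θ̂ʳᵇ − z·s, θ̂ʳᵇ + z·s] with θ̂ʳᵇ = θ̂ᵇ − (A/(A+τ²))b̂, s = (σ² + Aτ²/(A+τ²))^{1/2}, and z the (1−α/2)-quantile of the standard normal, satisfies P(θ ∈ I) = 1 − α. -/

import Mathlib

open MeasureTheory ProbabilityTheory NNReal

open Real in
lemma my_pdf_mul (v w : ℝ≥0) (hv : v ≠ 0) (hw : w ≠ 0) (x y : ℝ) :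
    gaussianPDFReal 0 v y * gaussianPDFReal 0 w (x - y)
      = gaussianPDFReal 0 (v + w) x
        * gaussianPDFReal ((v : ℝ) * x / ((v : ℝ) + (w : ℝ))) (v * w / (v + w)) y := by
  have hv' : (0:ℝ) < v := lt_of_le_of_ne v.coe_nonneg (by exact_mod_cast hv.symm)
  have hw' : (0:ℝ) < w := lt_of_le_of_ne w.coe_nonneg (by exact_mod_cast hw.symm)
  have hvw : (0:ℝ) < (v:ℝ) + w := by linarith
  have hu : ((v * w / (v + w) : ℝ≥0) : ℝ) = (v:ℝ) * w / ((v:ℝ) + w) := by push_cast; ring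
  simp only [gaussianPDFReal, hu, NNReal.coe_add, sub_zero]
  rw [mul_mul_mul_comm, mul_mul_mul_comm (√(2 * π * ((v:ℝ)+w)))⁻¹]
  congr 1
  · rw [← mul_inv, ← mul_inv, ← Real.sqrt_mul (by positivity), ← Real.sqrt_mul (by positivity)]
    congr 1
    field_simp
  · rw [← Real.exp_add, ← Real.exp_add]
    congr 1
    field_simp
    ring

lemma my_u_ne (v w : ℝ≥0) (hv : v ≠ 0) (hw : w ≠ 0) : v * w / (v + w) ≠ 0 := by
  refine div_ne_zero (mul_ne_zero hv hw) ?_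
  simp [hv, hw]

lemma my_integrable (v w : ℝ≥0) (hv : v ≠ 0) (hw : w ≠ 0) (x : ℝ) :
    Integrable (fun y => gaussianPDFReal 0 v y * gaussianPDFReal 0 w (x - y)) := by
  simp_rw [fun y => my_pdf_mul v w hv hw x y]
  exact (integrable_gaussianPDFReal _ _).const_mul _

lemma my_lint_conv (v w : ℝ≥0) (hv : v ≠ 0) (hw : w ≠ 0) (x : ℝ) :
    ∫⁻ y, gaussianPDF 0 v y * gaussianPDF 0 w (x - y) = gaussianPDF 0 (v + w) x := by
  have h : ∀ y, gaussianPDF 0 v y * gaussianPDF 0 w (x - y)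
      = ENNReal.ofReal (gaussianPDFReal 0 v y * gaussianPDFReal 0 w (x - y)) := fun y => by
    rw [gaussianPDF, gaussianPDF, ← ENNReal.ofReal_mul (gaussianPDFReal_nonneg _ _ _)]
  simp_rw [h]
  rw [← ofReal_integral_eq_lintegral_ofReal (my_integrable v w hv hw x)
    (ae_of_all _ fun y => mul_nonneg (gaussianPDFReal_nonneg _ _ _) (gaussianPDFReal_nonneg _ _ _))]
  simp_rw [fun y => my_pdf_mul v w hv hw x y]
  rw [integral_const_mul, integral_gaussianPDFReal_eq_one _ (my_u_ne v w hv hw), mul_one]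
  rfl

lemma my_prod_add (v w : ℝ≥0) :
    ((gaussianReal 0 v).prod (gaussianReal 0 w)).map (fun p : ℝ × ℝ => p.1 + p.2)
      = gaussianReal 0 (v + w) := by
  by_cases hv : v = 0
  · subst hv
    rw [zero_add, gaussianReal_zero_var, Measure.dirac_prod,
      Measure.map_map (by fun_prop : Measurable fun p : ℝ × ℝ => p.1 + p.2) measurable_prodMk_left]
    have : ((fun p : ℝ × ℝ => p.1 + p.2) ∘ Prod.mk 0) = (fun y : ℝ => 0 + y) := rfl
    rw [this]
    simpa using gaussianReal_map_const_add (μ := 0) (v := w) 0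
  by_cases hw : w = 0
  · subst hw
    rw [add_zero, gaussianReal_zero_var, Measure.prod_dirac,
      Measure.map_map (by fun_prop : Measurable fun p : ℝ × ℝ => p.1 + p.2) (measurable_prodMk_right)]
    have : ((fun p : ℝ × ℝ => p.1 + p.2) ∘ (fun x : ℝ => (x, (0:ℝ)))) = (fun y : ℝ => y + 0) := rfl
    rw [this]
    simpa using gaussianReal_map_add_const (μ := 0) (v := v) 0
  ext s hs
  rw [Measure.map_apply (by fun_prop : Measurable fun p : ℝ × ℝ => p.1 + p.2) hs,
    Measure.prod_apply ((by fun_prop : Measurable fun p : ℝ × ℝ => p.1 + p.2) hs)]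
  have h1 : ∀ x : ℝ, (Prod.mk x ⁻¹' ((fun p : ℝ × ℝ => p.1 + p.2) ⁻¹' s))
      = (fun y => x + y) ⁻¹' s := fun x => rfl
  have h2 : ∀ x : ℝ, gaussianReal 0 w ((fun y => x + y) ⁻¹' s)
      = ∫⁻ y in s, gaussianPDF 0 w (y - x) := by
    intro x
    rw [← Measure.map_apply (measurable_const_add x) hs, gaussianReal_map_const_add, zero_add,
      gaussianReal_apply _ hw s]
    congr 1
    ext y
    rw [gaussianPDF, gaussianPDF, gaussianPDFReal_sub, zero_add]
  simp_rw [h1, h2]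
  have hmeas : Measurable (Function.uncurry fun (x y : ℝ) =>
      gaussianPDF 0 v x * gaussianPDF 0 w (y - x)) :=
    ((measurable_gaussianPDF 0 v).comp measurable_fst).mul
      ((measurable_gaussianPDF 0 w).comp (measurable_snd.sub measurable_fst))
  have hF : Measurable fun x : ℝ => ∫⁻ y in s, gaussianPDF 0 w (y - x) :=
    Measurable.lintegral_prod_right'
      ((measurable_gaussianPDF 0 w).comp (measurable_snd.sub measurable_fst))
  rw [gaussianReal_of_var_ne_zero 0 hv,
    lintegral_withDensity_eq_lintegral_mul _ (measurable_gaussianPDF 0 v) hF]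
  have h4 : ∀ x : ℝ, (gaussianPDF 0 v * fun x => ∫⁻ y in s, gaussianPDF 0 w (y - x)) x
      = ∫⁻ y in s, gaussianPDF 0 v x * gaussianPDF 0 w (y - x) := by
    intro x
    simp only [Pi.mul_apply]
    exact (lintegral_const_mul _ (show Measurable fun y : ℝ => gaussianPDF 0 w (y - x) by
      exact (measurable_gaussianPDF 0 w).comp (measurable_sub_const x))).symm
  simp_rw [h4]
  rw [lintegral_lintegral_swap hmeas.aemeasurable]
  have h5 : ∀ y : ℝ, ∫⁻ x, gaussianPDF 0 v x * gaussianPDF 0 w (y - x)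
      = gaussianPDF 0 (v + w) y := fun y => my_lint_conv v w hv hw y
  simp_rw [h5]
  rw [gaussianReal_apply _ (by simp [hv]) s]

lemma my_prod_lin (a b : ℝ) (v w : ℝ≥0) :
    ((gaussianReal 0 v).prod (gaussianReal 0 w)).map (fun p : ℝ × ℝ => a * p.1 + b * p.2)
      = gaussianReal 0 (⟨a^2, sq_nonneg a⟩ * v + ⟨b^2, sq_nonneg b⟩ * w) := by
  have hcomp : (fun p : ℝ × ℝ => a * p.1 + b * p.2)
      = (fun p : ℝ × ℝ => p.1 + p.2) ∘ (Prod.map (a * ·) (b * ·)) := rfl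
  rw [hcomp, ← Measure.map_map (by fun_prop : Measurable fun p : ℝ × ℝ => p.1 + p.2)
      ((measurable_const_mul a).prodMap (measurable_const_mul b)),
    ← Measure.map_prod_map _ _ (measurable_const_mul a) (measurable_const_mul b),
    gaussianReal_map_const_mul, gaussianReal_map_const_mul, mul_zero, mul_zero, my_prod_add]
  rfl

theorem stmt2 (θ : ℝ) (A σ2 τ2 : ℝ≥0) (hσ : 0 < σ2) (hτ : 0 < τ2)
    (α : ℝ) (hα : α ∈ Set.Ioo (0 : ℝ) 1)
    (z : ℝ) (hz : gaussianReal 0 1 (Set.Iic z) = ENNReal.ofReal (1 - α / 2)) :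
    (((gaussianReal 0 A).prod ((gaussianReal 0 σ2).prod (gaussianReal 0 τ2))))
      {ω : ℝ × ℝ × ℝ |
        let θrb := (θ + ω.1 + ω.2.1) - ((A : ℝ) / ((A : ℝ) + (τ2 : ℝ))) * (ω.1 + ω.2.2)
        let s := Real.sqrt ((σ2 : ℝ) + (A : ℝ) * (τ2 : ℝ) / ((A : ℝ) + (τ2 : ℝ)))
        θrb - z * s ≤ θ ∧ θ ≤ θrb + z * s}
    = ENNReal.ofReal (1 - α) := by
  obtain ⟨hα0, hα1⟩ := hα
  have hτ' : (0:ℝ) < (τ2:ℝ) := hτ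
  have hσ' : (0:ℝ) < (σ2:ℝ) := hσ
  have hA : (0:ℝ) ≤ (A:ℝ) := A.coe_nonneg
  have hden : (0:ℝ) < (A:ℝ) + τ2 := by linarith
  set N := gaussianReal 0 1 with hN
  set c : ℝ := (A:ℝ) / ((A:ℝ) + (τ2:ℝ)) with hc
  set sr : ℝ := Real.sqrt ((σ2:ℝ) + (A:ℝ) * (τ2:ℝ) / ((A:ℝ) + (τ2:ℝ))) with hsr
  have hs2pos : (0:ℝ) < (σ2:ℝ) + (A:ℝ) * (τ2:ℝ) / ((A:ℝ) + (τ2:ℝ)) := by positivity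
  have hspos : 0 < sr := Real.sqrt_pos.mpr hs2pos
  set w2 : ℝ≥0 := ⟨(1:ℝ)^2, sq_nonneg 1⟩ * σ2 + ⟨(-c)^2, sq_nonneg (-c)⟩ * τ2 with hw2
  set s2 : ℝ≥0 := ⟨(1-c)^2, sq_nonneg (1-c)⟩ * A + ⟨(1:ℝ)^2, sq_nonneg 1⟩ * w2 with hs2
  have hs2coe : (s2 : ℝ) = (σ2:ℝ) + (A:ℝ) * (τ2:ℝ) / ((A:ℝ) + (τ2:ℝ)) := by
    rw [hs2, hw2]
    change (1-c)^2 * (A:ℝ) + (1:ℝ)^2 * ((1:ℝ)^2 * (σ2:ℝ) + (-c)^2 * (τ2:ℝ)) = _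
    rw [hc]
    field_simp
    ring
  -- measurability of the statistic
  have hg : Measurable (fun q : ℝ × ℝ => 1 * q.1 + (-c) * q.2) :=
    (measurable_fst.const_mul 1).add (measurable_snd.const_mul (-c))
  have hlin : Measurable (fun p : ℝ × ℝ => (1-c) * p.1 + 1 * p.2) :=
    (measurable_fst.const_mul (1-c)).add (measurable_snd.const_mul 1)
  have hf : Measurable (fun ω : ℝ × ℝ × ℝ => (1-c) * ω.1 + 1 * (1 * ω.2.1 + (-c) * ω.2.2)) :=
    hlin.comp (measurable_id.prodMap hg)
  have hmap : (((gaussianReal 0 A).prod ((gaussianReal 0 σ2).prod (gaussianReal 0 τ2)))).map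
      (fun ω : ℝ × ℝ × ℝ => (1-c) * ω.1 + 1 * (1 * ω.2.1 + (-c) * ω.2.2)) = gaussianReal 0 s2 := by
    have hfeq : (fun ω : ℝ × ℝ × ℝ => (1-c) * ω.1 + 1 * (1 * ω.2.1 + (-c) * ω.2.2))
        = (fun p : ℝ × ℝ => (1-c) * p.1 + 1 * p.2)
          ∘ (Prod.map id (fun q : ℝ × ℝ => 1 * q.1 + (-c) * q.2)) := rfl
    rw [hfeq, ← Measure.map_map hlin (measurable_id.prodMap hg),
      ← Measure.map_prod_map _ _ measurable_id hg, Measure.map_id,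
      my_prod_lin 1 (-c) σ2 τ2, ← hw2, my_prod_lin (1-c) 1 A w2, ← hs2]
  have hset : {ω : ℝ × ℝ × ℝ |
        let θrb := (θ + ω.1 + ω.2.1) - c * (ω.1 + ω.2.2)
        let s := sr
        θrb - z * s ≤ θ ∧ θ ≤ θrb + z * s}
      = (fun ω : ℝ × ℝ × ℝ => (1-c) * ω.1 + 1 * (1 * ω.2.1 + (-c) * ω.2.2)) ⁻¹'
          Set.Icc (-(z * sr)) (z * sr) := by
    ext ω
    have key : (θ + ω.1 + ω.2.1) - c * (ω.1 + ω.2.2) - θ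
        = (1-c) * ω.1 + 1 * (1 * ω.2.1 + (-c) * ω.2.2) := by ring
    simp only [Set.mem_setOf_eq, Set.mem_preimage, Set.mem_Icc]
    constructor
    · rintro ⟨h1, h2⟩
      exact ⟨by linarith, by linarith⟩
    · rintro ⟨h1, h2⟩
      exact ⟨by linarith, by linarith⟩
  rw [hset, ← Measure.map_apply hf measurableSet_Icc, hmap]
  have hsmap : N.map (fun x => sr * x) = gaussianReal 0 s2 := by
    rw [hN, gaussianReal_map_const_mul]
    congr 1
    · exact mul_zero sr
    · ext
      rw [NNReal.coe_mul, NNReal.coe_one, mul_one, hs2coe]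
      exact Real.sq_sqrt hs2pos.le
  rw [← hsmap, Measure.map_apply (measurable_const_mul sr) measurableSet_Icc]
  have hpre : (fun x => sr * x) ⁻¹' Set.Icc (-(z * sr)) (z * sr) = Set.Icc (-z) z := by
    ext x
    simp only [Set.mem_preimage, Set.mem_Icc]
    constructor
    · rintro ⟨h1, h2⟩
      exact ⟨by nlinarith, by nlinarith⟩
    · rintro ⟨h1, h2⟩
      exact ⟨by nlinarith, by nlinarith⟩
  rw [hpre]
  -- standard normal computation
  have hatom : ∀ a : ℝ, N {a} = 0 := fun a =>
    gaussianReal_absolutelyContinuous 0 one_ne_zero (by simp)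
  have hIicIio : ∀ a : ℝ, N (Set.Iic a) = N (Set.Iio a) := by
    intro a
    rw [← Set.Iio_union_right,
      measure_union (Set.disjoint_singleton_right.mpr (by simp)) (measurableSet_singleton a),
      hatom a, add_zero]
  have hneg : N.map (fun x : ℝ => -x) = N := by
    have h0 := gaussianReal_map_const_mul (μ := 0) (v := 1) (-1)
    have h1 : (-1 : ℝ) * 0 = 0 := by norm_num
    have h2 : NNReal.mk ((-1:ℝ)^2) (sq_nonneg _) * 1 = 1 := by ext; norm_num
    rw [h1, h2] at h0
    simp only [neg_one_mul] at h0
    rw [hN]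
    exact h0
  have hIicneg : ∀ a : ℝ, N (Set.Iic (-a)) = N (Set.Ici a) := by
    intro a
    have hp : (fun x : ℝ => -x) ⁻¹' (Set.Iic (-a)) = Set.Ici a := by
      ext x; simp
    calc N (Set.Iic (-a)) = (N.map (fun x : ℝ => -x)) (Set.Iic (-a)) := by rw [hneg]
    _ = N (Set.Ici a) := by rw [Measure.map_apply measurable_neg measurableSet_Iic, hp]
  have hIci : ∀ a : ℝ, N (Set.Ici a) = 1 - N (Set.Iio a) := by
    intro a
    rw [← Set.compl_Iio, measure_compl measurableSet_Iio (measure_ne_top N _), measure_univ]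
  have hz0 : 0 ≤ z := by
    by_contra hcon
    push_neg at hcon
    have hdisj : Disjoint (Set.Iic z) (Set.Ici (-z)) := by
      rw [Set.disjoint_left]
      intro x hx hx'
      simp only [Set.mem_Iic, Set.mem_Ici] at hx hx'
      linarith
    have hle : N (Set.Iic z) + N (Set.Ici (-z)) ≤ 1 := by
      rw [← measure_union hdisj measurableSet_Ici]
      exact (measure_mono (Set.subset_univ _)).trans measure_univ.le
    have h2 : N (Set.Ici (-z)) = N (Set.Iic z) := by
      have h3 := hIicneg (-z)
      rw [neg_neg] at h3
      exact h3.symm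
    rw [h2, hz, ← ENNReal.ofReal_add (by linarith) (by linarith)] at hle
    have h4 : (1 - α/2) + (1 - α/2) ≤ 1 := by
      have := ENNReal.ofReal_le_one.mp hle
      linarith
    linarith
  have hIio : N (Set.Iio (-z)) = ENNReal.ofReal (α/2) := by
    rw [← hIicIio, hIicneg z, hIci z, ← hIicIio z, hz,
      ← ENNReal.ofReal_one, ← ENNReal.ofReal_sub _ (by linarith)]
    norm_num
  have hIcc : Set.Icc (-z) z = Set.Iic z \ Set.Iio (-z) := by
    ext x
    simp only [Set.mem_Icc, Set.mem_diff, Set.mem_Iic, Set.mem_Iio, not_lt]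
    constructor
    · intro h; exact ⟨h.2, h.1⟩
    · intro h; exact ⟨h.2, h.1⟩
  have hsub : Set.Iio (-z) ⊆ Set.Iic z := by
    intro x hx
    simp only [Set.mem_Iio] at hx
    simp only [Set.mem_Iic]
    linarith
  rw [hIcc, measure_diff hsub measurableSet_Iio.nullMeasurableSet (measure_ne_top N _),
    hIio, hz, ← ENNReal.ofReal_sub _ (by linarith)]
  congr 1
  ring
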